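/- Let x ∈ R^N, 1 < q < ∞, and suppose ‖w‖₂ ≤ ε where y = Ax + w. If x̂ solves the basis pursuit min ‖z‖₁ s.t. ‖y − Az‖₂ ≤ ε and ρ_{q, 4^{q/(q−1)}k}(A) > 0, then ‖x̂ − x‖_q ≤ 2ε / ρ_{q, 4^{q/(q−1)}k}(A) + k^{1/q−1} σ_k(x)₁ and ‖x̂ − x‖₁ ≤ 4 k^{1−1/q} ε / ρ_{q, 4^{q/(q−1)}k}(A) + 4 σ_k(x)₁. -/

import Mathlib

open Finset Matrix

noncomputable def l1 {N : ℕ} (z : Fin N → ℝ) : ℝ := ∑ i, |z i|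
noncomputable def lq {N : ℕ} (q : ℝ) (z : Fin N → ℝ) : ℝ := (∑ i, |z i| ^ q) ^ (1/q)
noncomputable def l2 {m : ℕ} (v : Fin m → ℝ) : ℝ := Real.sqrt (∑ i, (v i)^2)
noncomputable def linf {N : ℕ} (z : Fin N → ℝ) : ℝ := ⨆ i, |z i|
open scoped Classical in
noncomputable def l0 {N : ℕ} (z : Fin N → ℝ) : ℕ := (Finset.univ.filter (fun i => z i ≠ 0)).card
noncomputable def sparsityQ {N : ℕ} (q : ℝ) (z : Fin N → ℝ) : ℝ := (l1 z / lq q z) ^ (q/(q-1))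
noncomputable def cmsv {m N : ℕ} (q s : ℝ) (A : Matrix (Fin m) (Fin N) ℝ) : ℝ :=
  sInf { r | ∃ z : Fin N → ℝ, z ≠ 0 ∧ sparsityQ q z ≤ s ∧ r = l2 (A.mulVec z) / lq q z }

noncomputable def sigmak {N : ℕ} (k : ℕ) (x : Fin N → ℝ) : ℝ :=
  sInf { r | ∃ z : Fin N → ℝ, l0 z ≤ k ∧ r = l1 (x - z) }

lemma l1_nonneg {N : ℕ} (z : Fin N → ℝ) : 0 ≤ l1 z :=
  Finset.sum_nonneg fun _ _ => abs_nonneg _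

lemma l1_pos {N : ℕ} {z : Fin N → ℝ} (hz : z ≠ 0) : 0 < l1 z := by
  obtain ⟨i, hi⟩ := Function.ne_iff.mp hz
  exact Finset.sum_pos' (fun _ _ => abs_nonneg _)
    ⟨i, Finset.mem_univ _, abs_pos.mpr hi⟩

lemma lq_nonneg {N : ℕ} (q : ℝ) (z : Fin N → ℝ) : 0 ≤ lq q z :=
  Real.rpow_nonneg (Finset.sum_nonneg fun _ _ => Real.rpow_nonneg (abs_nonneg _) _) _

lemma lq_pos {N : ℕ} {q : ℝ} (hq : 0 < q) {z : Fin N → ℝ} (hz : z ≠ 0) : 0 < lq q z := by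
  obtain ⟨i, hi⟩ := Function.ne_iff.mp hz
  have hs : 0 < ∑ i, |z i| ^ q :=
    Finset.sum_pos' (fun _ _ => Real.rpow_nonneg (abs_nonneg _) _)
      ⟨i, Finset.mem_univ _, Real.rpow_pos_of_pos (abs_pos.mpr hi) _⟩
  exact Real.rpow_pos_of_pos hs _

lemma l2_nonneg {m : ℕ} (v : Fin m → ℝ) : 0 ≤ l2 v := Real.sqrt_nonneg _

lemma l2_eq_norm {m : ℕ} (v : Fin m → ℝ) :
    l2 v = ‖(WithLp.equiv 2 (Fin m → ℝ)).symm v‖ := by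
  rw [EuclideanSpace.norm_eq]
  simp [l2, sq_abs]

lemma l2_add_le {m : ℕ} (u v : Fin m → ℝ) : l2 (u + v) ≤ l2 u + l2 v := by
  rw [l2_eq_norm, l2_eq_norm, l2_eq_norm]
  rw [show (WithLp.equiv 2 (Fin m → ℝ)).symm (u + v)
      = (WithLp.equiv 2 (Fin m → ℝ)).symm u + (WithLp.equiv 2 (Fin m → ℝ)).symm v from rfl]
  exact norm_add_le _ _

lemma l2_neg {m : ℕ} (v : Fin m → ℝ) : l2 (-v) = l2 v := by
  simp [l2, neg_sq]

lemma sigmak_nonneg {N : ℕ} (k : ℕ) (x : Fin N → ℝ) : 0 ≤ sigmak k x := by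
  apply le_csInf
  · exact ⟨l1 x, 0, by simp [l0], by simp⟩
  · rintro r ⟨z, -, rfl⟩
    exact l1_nonneg _

theorem stmt18 {m N k : ℕ} (A : Matrix (Fin m) (Fin N) ℝ)
    (x xh : Fin N → ℝ) (w y : Fin m → ℝ) (ε : ℝ)
    (hy : y = A.mulVec x + w) (hw : l2 w ≤ ε) (q : ℝ) (hq : 1 < q)
    (hfeas : l2 (y - A.mulVec xh) ≤ ε)
    (hmin : ∀ z : Fin N → ℝ, l2 (y - A.mulVec z) ≤ ε → l1 xh ≤ l1 z)
    (hρ : 0 < cmsv q ((4:ℝ) ^ (q/(q-1)) * (k : ℝ)) A) :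
    lq q (xh - x) ≤ 2 * ε / cmsv q ((4:ℝ) ^ (q/(q-1)) * (k : ℝ)) A +
        (k : ℝ) ^ (1/q - 1) * sigmak k x ∧
      l1 (xh - x) ≤ 4 * (k : ℝ) ^ (1 - 1/q) * ε / cmsv q ((4:ℝ) ^ (q/(q-1)) * (k : ℝ)) A +
        4 * sigmak k x := by
  classical
  have hq0 : (0:ℝ) < q := lt_trans one_pos hq
  have hq1 : q - 1 ≠ 0 := sub_ne_zero.mpr (ne_of_gt hq)
  have hqne : q ≠ 0 := ne_of_gt hq0
  have he_pos : 0 < q / (q - 1) := div_pos hq0 (by linarith)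
  have hε : 0 ≤ ε := (l2_nonneg w).trans hw
  set ρ := cmsv q ((4:ℝ) ^ (q/(q-1)) * (k : ℝ)) A with hρdef
  set σ := sigmak k x with hσdef
  have hσ0 : 0 ≤ σ := sigmak_nonneg k x
  set K : ℝ := (k:ℝ) ^ (1 - 1/q) with hKdef
  set L : ℝ := lq q (xh - x) with hLdef
  have hK0 : 0 ≤ K := Real.rpow_nonneg (Nat.cast_nonneg k) _
  have hL0 : 0 ≤ L := lq_nonneg _ _
  -- x is feasible
  have hxh_le : l1 xh ≤ l1 x := by
    apply hmin
    rw [hy, add_sub_cancel_left]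
    exact hw
  -- cone constraint
  have hcone : l1 (xh - x) ≤ 2 * K * L + 2 * σ := by
    have hkey : (l1 (xh - x) - 2 * K * L) / 2 ≤ σ := by
      apply le_csInf
      · exact ⟨l1 x, 0, by simp [l0], by simp⟩
      rintro r ⟨z, hz, rfl⟩
      set T : Finset (Fin N) := Finset.univ.filter (fun i => z i ≠ 0) with hT
      have hTcard : (T.card : ℝ) ≤ (k : ℝ) := by
        exact_mod_cast hz
      -- split of l1 norms
      have hsplitxh : ∑ i ∈ T, |xh i| + ∑ i ∈ Tᶜ, |xh i| = l1 xh :=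
        Finset.sum_add_sum_compl T _
      have hsplitx : ∑ i ∈ T, |x i| + ∑ i ∈ Tᶜ, |x i| = l1 x :=
        Finset.sum_add_sum_compl T _
      have hsplith : ∑ i ∈ T, |(xh - x) i| + ∑ i ∈ Tᶜ, |(xh - x) i| = l1 (xh - x) :=
        Finset.sum_add_sum_compl T _
      -- pointwise bounds
      have hTbound : ∑ i ∈ T, (|x i| - |(xh - x) i|) ≤ ∑ i ∈ T, |xh i| := by
        apply Finset.sum_le_sum
        intro i _
        have := abs_sub_abs_le_abs_sub (x i) (xh i)
        have h2 : |x i - xh i| = |(xh - x) i| := by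
          rw [Pi.sub_apply, abs_sub_comm]
        linarith [h2 ▸ this]
      have hTcbound : ∑ i ∈ Tᶜ, (|(xh - x) i| - |x i|) ≤ ∑ i ∈ Tᶜ, |xh i| := by
        apply Finset.sum_le_sum
        intro i _
        have : |(xh - x) i| ≤ |xh i| + |x i| := by
          rw [Pi.sub_apply]; exact abs_sub _ _
        linarith
      rw [Finset.sum_sub_distrib] at hTbound
      rw [Finset.sum_sub_distrib] at hTcbound
      -- tail of x bounded by l1 (x - z)
      have htail : ∑ i ∈ Tᶜ, |x i| ≤ l1 (x - z) := by
        have : ∑ i ∈ Tᶜ, |x i| = ∑ i ∈ Tᶜ, |(x - z) i| := by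
          apply Finset.sum_congr rfl
          intro i hi
          have : z i = 0 := by
            have := Finset.mem_compl.mp hi
            simp [hT] at this
            exact this
          simp [Pi.sub_apply, this]
        rw [this]
        exact Finset.sum_le_sum_of_subset_of_nonneg (Finset.subset_univ _)
          (fun _ _ _ => abs_nonneg _)
      -- Hölder on T
      have hhold : ∑ i ∈ T, |(xh - x) i| ≤ K * L := by
        have hpq : Real.HolderConjugate q (q / (q - 1)) := (Real.holderConjugate_iff_eq_conjExponent hq).2 rfl
        have := Real.inner_le_Lp_mul_Lq (s := T) (f := fun i => |(xh - x) i|)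
          (g := fun _ => (1:ℝ)) hpq
        simp only [mul_one, abs_abs, abs_one, Real.one_rpow, Finset.sum_const,
          nsmul_eq_mul, mul_one] at this
        have h1 : (∑ i ∈ T, |(xh - x) i| ^ q) ^ (1/q) ≤ L := by
          apply Real.rpow_le_rpow (Finset.sum_nonneg fun _ _ => Real.rpow_nonneg (abs_nonneg _) _)
          · exact Finset.sum_le_sum_of_subset_of_nonneg (Finset.subset_univ _)
              (fun _ _ _ => Real.rpow_nonneg (abs_nonneg _) _)
          · positivity
        have h2 : ((T.card : ℝ)) ^ (1/(q/(q-1))) ≤ K := by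
          have he : 1/(q/(q-1)) = 1 - 1/q := by field_simp
          rw [he, hKdef]
          exact Real.rpow_le_rpow (Nat.cast_nonneg _) hTcard (by
            rw [sub_nonneg]
            rw [div_le_one hq0]
            linarith)
        calc ∑ i ∈ T, |(xh - x) i|
            ≤ (∑ i ∈ T, |(xh - x) i| ^ q) ^ (1/q) * ((T.card : ℝ)) ^ (1/(q/(q-1))) := this
          _ ≤ L * K := by
              apply mul_le_mul h1 h2 (Real.rpow_nonneg (Nat.cast_nonneg _) _)
              exact hL0
          _ = K * L := mul_comm _ _
      -- combine
      have hxz0 : 0 ≤ l1 (x - z) := l1_nonneg _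
      linarith
    linarith
  -- k = 0 is impossible
  rcases Nat.eq_zero_or_pos k with rfl | hk
  · exfalso
    have hempty : { r | ∃ z : Fin N → ℝ, z ≠ 0 ∧
        sparsityQ q z ≤ (4:ℝ) ^ (q/(q-1)) * ((0:ℕ) : ℝ) ∧
        r = l2 (A.mulVec z) / lq q z } = ∅ := by
      ext r
      simp only [Set.mem_setOf_eq, Set.mem_empty_iff_false, iff_false]
      rintro ⟨z, hz0, hsp, -⟩
      have : 0 < sparsityQ q z :=
        Real.rpow_pos_of_pos (div_pos (l1_pos hz0) (lq_pos hq0 hz0)) _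
      rw [Nat.cast_zero, mul_zero] at hsp
      linarith
    have : ρ = 0 := by
      rw [hρdef, cmsv, hempty, Real.sInf_empty]
    rw [this] at hρ
    exact absurd hρ (lt_irrefl 0)
  have hKpos : 0 < K := Real.rpow_pos_of_pos (by exact_mod_cast hk) _
  -- case xh = x
  by_cases hh : xh - x = 0
  · have hL : L = 0 := by
      rw [hLdef, hh, lq]
      have : ∀ i : Fin N, |(0 : Fin N → ℝ) i| ^ q = 0 := by
        intro i
        simp [Real.zero_rpow hqne]
      rw [Finset.sum_congr rfl (fun i _ => this i), Finset.sum_const, smul_zero,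
        Real.zero_rpow (by positivity : 1/q ≠ 0)]
    have hl1 : l1 (xh - x) = 0 := by
      rw [hh, l1]; simp
    constructor
    · rw [hL]
      have h1 : 0 ≤ 2 * ε / ρ := div_nonneg (by linarith) hρ.le
      have h2 : 0 ≤ (k:ℝ) ^ (1/q - 1) * σ :=
        mul_nonneg (Real.rpow_nonneg (Nat.cast_nonneg _) _) hσ0
      linarith
    · rw [hl1]
      have h1 : 0 ≤ 4 * K * ε / ρ := div_nonneg (by positivity) hρ.le
      linarith
  -- main case
  have hLpos : 0 < L := lq_pos hq0 hh
  have hKinv : (k:ℝ) ^ (1/q - 1) = K⁻¹ := by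
    rw [hKdef, ← Real.rpow_neg (Nat.cast_nonneg k), neg_sub]
  by_cases hcase : σ ≤ K * L
  · -- small sigma: use cmsv
    have hl1small : l1 (xh - x) ≤ 4 * K * L := by linarith
    have hsp : sparsityQ q (xh - x) ≤ (4:ℝ) ^ (q/(q-1)) * (k : ℝ) := by
      rw [sparsityQ]
      have hdiv : l1 (xh - x) / L ≤ 4 * K := by
        rw [div_le_iff₀ hLpos]
        linarith
      have h1 : (l1 (xh - x) / lq q (xh - x)) ^ (q/(q-1)) ≤ (4 * K) ^ (q/(q-1)) := by
        apply Real.rpow_le_rpow (div_nonneg (l1_nonneg _) hL0) hdiv he_pos.le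
      have hKe : K ^ (q/(q-1)) = (k:ℝ) := by
        rw [hKdef, ← Real.rpow_mul (Nat.cast_nonneg k)]
        have harith : (1 - 1/q) * (q/(q-1)) = 1 := by field_simp
        rw [harith, Real.rpow_one]
      have h2 : (4 * K : ℝ) ^ (q/(q-1)) = (4:ℝ) ^ (q/(q-1)) * (k : ℝ) := by
        rw [Real.mul_rpow (by norm_num) hK0, hKe]
      rw [h2] at h1
      exact h1
    have hbdd : BddBelow { r | ∃ z : Fin N → ℝ, z ≠ 0 ∧
        sparsityQ q z ≤ (4:ℝ) ^ (q/(q-1)) * (k : ℝ) ∧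
        r = l2 (A.mulVec z) / lq q z } := by
      refine ⟨0, ?_⟩
      rintro r ⟨z, -, -, rfl⟩
      exact div_nonneg (l2_nonneg _) (lq_nonneg _ _)
    have hρle : ρ ≤ l2 (A.mulVec (xh - x)) / L := by
      rw [hρdef, cmsv]
      exact csInf_le hbdd ⟨xh - x, hh, hsp, rfl⟩
    have hAh : l2 (A.mulVec (xh - x)) ≤ 2 * ε := by
      have heq : A.mulVec (xh - x) = (A.mulVec xh - y) + w := by
        rw [Matrix.mulVec_sub, hy]
        abel
      rw [heq]
      have h1 := l2_add_le (A.mulVec xh - y) w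
      have h2 : l2 (A.mulVec xh - y) = l2 (y - A.mulVec xh) := by
        rw [← l2_neg (y - A.mulVec xh), neg_sub]
      linarith
    have hLle : L ≤ 2 * ε / ρ := by
      rw [le_div_iff₀ hρ]
      have := (le_div_iff₀ hLpos).mp hρle
      calc L * ρ = ρ * L := mul_comm _ _
        _ ≤ l2 (A.mulVec (xh - x)) := this
        _ ≤ 2 * ε := hAh
    constructor
    · have h2 : 0 ≤ (k:ℝ) ^ (1/q - 1) * σ :=
        mul_nonneg (Real.rpow_nonneg (Nat.cast_nonneg _) _) hσ0
      linarith
    · have h1 : 2 * K * L ≤ 2 * K * (2 * ε / ρ) :=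
        mul_le_mul_of_nonneg_left hLle (by positivity)
      have h2 : 2 * K * (2 * ε / ρ) = 4 * K * ε / ρ := by ring
      linarith
  · -- large sigma
    push_neg at hcase
    have hLle : L ≤ K⁻¹ * σ := by
      have := mul_le_mul_of_nonneg_left hcase.le (inv_nonneg.mpr hKpos.le)
      calc L = K⁻¹ * (K * L) := by field_simp
        _ ≤ K⁻¹ * σ := this
    constructor
    · rw [hKinv]
      have h1 : 0 ≤ 2 * ε / ρ := div_nonneg (by linarith) hρ.le
      linarith
    · have h1 : 2 * K * L ≤ 2 * σ := by
        have := hcase.le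
        nlinarith
      have h2 : 0 ≤ 4 * K * ε / ρ := div_nonneg (by positivity) hρ.le
      linarith
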